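/- Let 0<q<1 be real, h1,h2,l1,l2,α1,α2,β real, t1,t2 nonzero complex, and let (i,i') = (1,2) or (2,1). If β = ε·(h1+h2−l1−l2+α_i−α_{i'}+2) for some ε ∈ {1,−1}, then for every nonzero complex x, (A⟨4⟩(x; h1,h2,l1,l2,α1,α2,β) applied to the function x ↦ x^{−α_i})(x) = −(q^{α_i+h1+1/2}t1 + q^{α_i+h2+1/2}t2 + q^{α_{i'}+l1−1/2}t1 + q^{α_{i'}+l2−1/2}t2)·x^{−α_i}. -/
import Mathlib


open Filter Topology

/-- The infinite q-Pochhammer symbol `(a;q)_∞ = ∏_{j=0}^∞ (1 - q^j a)`. -/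
noncomputable def qPochInf (q : ℝ) (a : ℂ) : ℂ := ∏' j : ℕ, (1 - (q : ℂ) ^ j * a)

/-- `q^r` for a real exponent `r`, using the principal branch of the complex power. -/
noncomputable def qpow (q : ℝ) (r : ℝ) : ℂ := (q : ℂ) ^ (r : ℂ)

/-- The fourth degenerate Ruijsenaars–van Diejen operator `A⟨4⟩` applied to `g` at `x`. -/
noncomputable def A4 (q : ℝ) (t1 t2 : ℂ) (h1 h2 l1 l2 a1 a2 b : ℝ) (g : ℂ → ℂ) (x : ℂ) : ℂ :=
  x⁻¹ * (x - qpow q (h1 + 1/2) * t1) * (x - qpow q (h2 + 1/2) * t2) * g (x / (q : ℂ))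
    + qpow q (a1 + a2) * x⁻¹ * (x - qpow q (l1 - 1/2) * t1) * (x - qpow q (l2 - 1/2) * t2) *
        g ((q : ℂ) * x)
    - ((qpow q a1 + qpow q a2) * x
        + qpow q ((h1 + h2 + l1 + l2 + a1 + a2) / 2) * (qpow q (b / 2) + qpow q (-(b / 2))) *
            t1 * t2 * x⁻¹) * g x

lemma cpow_real_mul {r : ℝ} (hr : 0 < r) {x : ℂ} (hx : x ≠ 0) (c : ℂ) :
    ((r : ℂ) * x) ^ c = (r : ℂ) ^ c * x ^ c := by
  have hr' : (r : ℂ) ≠ 0 := by exact_mod_cast hr.ne'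
  rw [Complex.cpow_def_of_ne_zero (mul_ne_zero hr' hx),
    Complex.cpow_def_of_ne_zero hr', Complex.cpow_def_of_ne_zero hx,
    Complex.log_ofReal_mul hr hx, add_mul, Complex.exp_add, Complex.ofReal_log hr.le]

lemma qpow_add {q : ℝ} (hq : 0 < q) (r s : ℝ) :
    qpow q (r + s) = qpow q r * qpow q s := by
  have : (q : ℂ) ≠ 0 := by exact_mod_cast hq.ne'
  simp [qpow, Complex.ofReal_add, Complex.cpow_add _ _ this]

lemma qpow_ne_zero {q : ℝ} (hq : 0 < q) (r : ℝ) : qpow q r ≠ 0 := by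
  have : (q : ℂ) ≠ 0 := by exact_mod_cast hq.ne'
  simp [qpow]
  intro h; exact absurd h hq.ne'

lemma qpow_neg {q : ℝ} (r : ℝ) : qpow q (-r) = (qpow q r)⁻¹ := by
  rw [qpow, qpow, Complex.ofReal_neg, Complex.cpow_neg]

lemma qpow_ofReal {q : ℝ} (hq : 0 ≤ q) (r : ℝ) : qpow q r = ((q ^ r : ℝ) : ℂ) :=
  (Complex.ofReal_cpow hq r).symm

theorem stmt16 (q : ℝ) (hq0 : 0 < q) (hq1 : q < 1)
    (h1 h2 l1 l2 a1 a2 b : ℝ) (t1 t2 : ℂ) (ht1 : t1 ≠ 0) (ht2 : t2 ≠ 0)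
    (ai ai' : ℝ) (hii : (ai = a1 ∧ ai' = a2) ∨ (ai = a2 ∧ ai' = a1))
    (hb : b = h1 + h2 - l1 - l2 + ai - ai' + 2 ∨ b = -(h1 + h2 - l1 - l2 + ai - ai' + 2)) :
    ∀ x : ℂ, x ≠ 0 →
      A4 q t1 t2 h1 h2 l1 l2 a1 a2 b (fun y => y ^ ((-ai : ℝ) : ℂ)) x
        = -(qpow q (ai + h1 + 1/2) * t1 + qpow q (ai + h2 + 1/2) * t2
            + qpow q (ai' + l1 - 1/2) * t1 + qpow q (ai' + l2 - 1/2) * t2) *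
          x ^ ((-ai : ℝ) : ℂ) := by
  intro x hx
  have hsum : a1 + a2 = ai + ai' := by
    rcases hii with ⟨e1, e2⟩ | ⟨e1, e2⟩ <;> rw [e1, e2] <;> ring
  have haa : qpow q a1 + qpow q a2 = qpow q ai + qpow q ai' := by
    rcases hii with ⟨e1, e2⟩ | ⟨e1, e2⟩ <;> rw [e1, e2] <;> ring
  have hE : qpow q ((h1 + h2 + l1 + l2 + a1 + a2) / 2) * (qpow q (b / 2) + qpow q (-(b / 2)))
      = qpow q ai * qpow q (h1 + 1/2) * qpow q (h2 + 1/2)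
        + qpow q ai' * qpow q (l1 - 1/2) * qpow q (l2 - 1/2) := by
    rw [mul_add, ← qpow_add hq0, ← qpow_add hq0]
    rcases hb with hb | hb
    · rw [show (h1 + h2 + l1 + l2 + a1 + a2) / 2 + b / 2 = ai + (h1 + 1/2) + (h2 + 1/2) by
          subst hb; linarith,
        show (h1 + h2 + l1 + l2 + a1 + a2) / 2 + -(b / 2) = ai' + (l1 - 1/2) + (l2 - 1/2) by
          subst hb; linarith]
      simp only [qpow_add hq0]; try ring
    · rw [show (h1 + h2 + l1 + l2 + a1 + a2) / 2 + b / 2 = ai' + (l1 - 1/2) + (l2 - 1/2) by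
          subst hb; linarith,
        show (h1 + h2 + l1 + l2 + a1 + a2) / 2 + -(b / 2) = ai + (h1 + 1/2) + (h2 + 1/2) by
          subst hb; linarith]
      simp only [qpow_add hq0]; try ring
  have h12 : qpow q (a1 + a2) = qpow q ai * qpow q ai' := by rw [hsum, qpow_add hq0]
  have hxq : (x / (q : ℂ)) ^ ((-ai : ℝ) : ℂ) = qpow q ai * x ^ ((-ai : ℝ) : ℂ) := by
    have hdiv : x / (q : ℂ) = ((q⁻¹ : ℝ) : ℂ) * x := by push_cast; ring
    rw [hdiv, cpow_real_mul (inv_pos.mpr hq0) hx]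
    congr 1
    show qpow q⁻¹ (-ai) = qpow q ai
    rw [qpow_ofReal (inv_nonneg.mpr hq0.le), qpow_ofReal hq0.le,
      Real.inv_rpow hq0.le, Real.rpow_neg hq0.le, inv_inv]
  have hqx : ((q : ℂ) * x) ^ ((-ai : ℝ) : ℂ) = qpow q (-ai) * x ^ ((-ai : ℝ) : ℂ) :=
    cpow_real_mul hq0 hx _
  simp only [A4]
  rw [hxq, hqx, hE, h12, haa, qpow_neg,
    show ai + h1 + 1/2 = ai + (h1 + 1/2) by ring, qpow_add hq0 ai (h1 + 1/2),
    show ai + h2 + 1/2 = ai + (h2 + 1/2) by ring, qpow_add hq0 ai (h2 + 1/2),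
    show ai' + l1 - 1/2 = ai' + (l1 - 1/2) by ring, qpow_add hq0 ai' (l1 - 1/2),
    show ai' + l2 - 1/2 = ai' + (l2 - 1/2) by ring, qpow_add hq0 ai' (l2 - 1/2)]
  have hP : qpow q ai ≠ 0 := qpow_ne_zero hq0 ai
  field_simp
  ring
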